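/- (Identification in the staggered design.) Fix a treatment group g with P(G = g) > 0 and P(G = ∞) > 0, and an event time e. Assume groupwise no anticipation, E[Y(g, g) − Y(g, ∞) | G = g] = 0, and groupwise parallel trends, E[Y(g+e, ∞) − Y(g, ∞) | G = g] = E[Y(g+e, ∞) − Y(g, ∞) | G = ∞]. Then the group-specific ATT is identified by the group-specific DiD parameter: θ_{ATT,g}(e) = β_g(e), i.e., E[Y(g+e, g) − Y(g+e, ∞) | G = g] = E[Y(g+e) − Y(g) | G = g] − E[Y(g+e) − Y(g) | G = ∞]. -/
import Mathlib


open MeasureTheory ProbabilityTheory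

/-- Identification in the staggered design: under groupwise no
anticipation and groupwise parallel trends, the group-specific ATT is identified by the
group-specific DiD parameter, `θ_{ATT,g}(e) = β_g(e)`. Here `γ` is the type of group
labels, `g` the treatment group under consideration (with reference period `gt`), and
`inf` the never-treated label. -/
theorem staggered_did_identification
    {Ω γ : Type*} [MeasurableSpace Ω] [MeasurableSpace γ] [MeasurableSingletonClass γ]
    (P : Measure Ω) [IsProbabilityMeasure P]
    (G : Ω → γ) (hG : Measurable G)
    (g inf : γ) (hginf : g ≠ inf)
    (hPg : 0 < P {ω | G ω = g}) (hPinf : 0 < P {ω | G ω = inf})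
    (gt e : ℝ)
    (Ypot : ℝ → γ → Ω → ℝ)
    (hint : ∀ s ∈ ({gt, gt + e} : Set ℝ), ∀ k ∈ ({g, inf} : Set γ),
      Integrable (Ypot s k) (P[|{ω | G ω = g}])
        ∧ Integrable (Ypot s k) (P[|{ω | G ω = inf}]))
    (Yobs : ℝ → Ω → ℝ) (hYobs : ∀ s ω, Yobs s ω = Ypot s (G ω) ω)
    -- groupwise no anticipation
    (hNA : (∫ ω, (Ypot gt g ω - Ypot gt inf ω) ∂(P[|{ω | G ω = g}])) = 0)
    -- groupwise parallel trends
    (hPT : (∫ ω, (Ypot (gt + e) inf ω - Ypot gt inf ω) ∂(P[|{ω | G ω = g}]))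
      = ∫ ω, (Ypot (gt + e) inf ω - Ypot gt inf ω) ∂(P[|{ω | G ω = inf}])) :
    (∫ ω, (Ypot (gt + e) g ω - Ypot (gt + e) inf ω) ∂(P[|{ω | G ω = g}]))
      = (∫ ω, (Yobs (gt + e) ω - Yobs gt ω) ∂(P[|{ω | G ω = g}]))
        - ∫ ω, (Yobs (gt + e) ω - Yobs gt ω) ∂(P[|{ω | G ω = inf}]) := by
  set μg := P[|{ω | G ω = g}] with hμg
  set μi := P[|{ω | G ω = inf}] with hμi
  have hmg : MeasurableSet {ω | G ω = g} := hG (measurableSet_singleton g)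
  have hmi : MeasurableSet {ω | G ω = inf} := hG (measurableSet_singleton inf)
  have haeg : ∀ᵐ ω ∂μg, G ω = g := by
    rw [hμg, ProbabilityTheory.cond]
    exact Measure.ae_smul_measure (ae_restrict_of_forall_mem hmg (fun ω hω => hω)) _
  have haei : ∀ᵐ ω ∂μi, G ω = inf := by
    rw [hμi, ProbabilityTheory.cond]
    exact Measure.ae_smul_measure (ae_restrict_of_forall_mem hmi (fun ω hω => hω)) _
  have hobsg : ∀ s, ∫ ω, Yobs s ω ∂μg = ∫ ω, Ypot s g ω ∂μg := by
    intro s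
    refine integral_congr_ae (haeg.mono fun ω hω => ?_)
    rw [hYobs, hω]
  have hobsi : ∀ s, ∫ ω, Yobs s ω ∂μi = ∫ ω, Ypot s inf ω ∂μi := by
    intro s
    refine integral_congr_ae (haei.mono fun ω hω => ?_)
    rw [hYobs, hω]
  have h1 := hint gt (by simp) g (by simp)
  have h2 := hint gt (by simp) inf (by simp)
  have h3 := hint (gt+e) (by simp) g (by simp)
  have h4 := hint (gt+e) (by simp) inf (by simp)
  have hYobsg : ∀ s ∈ ({gt, gt+e} : Set ℝ), Integrable (Yobs s) μg := by
    intro s hs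
    refine ((hint s hs g (by simp)).1).congr (haeg.mono fun ω hω => ?_)
    rw [hYobs, hω]
  have hYobsi : ∀ s ∈ ({gt, gt+e} : Set ℝ), Integrable (Yobs s) μi := by
    intro s hs
    refine ((hint s hs inf (by simp)).2).congr (haei.mono fun ω hω => ?_)
    rw [hYobs, hω]
  rw [integral_sub h3.1 h4.1, integral_sub (hYobsg _ (by simp)) (hYobsg _ (by simp)),
    integral_sub (hYobsi _ (by simp)) (hYobsi _ (by simp)),
    hobsg, hobsg, hobsi, hobsi]
  rw [integral_sub h1.1 h2.1] at hNA
  rw [integral_sub h4.1 h2.1, integral_sub h4.2 h2.2] at hPT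
  linarith
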